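/- If Γ' is a triangulation of a surface, then every zigzag e_1, e_2, e_3, … in Γ' extends to a zigzag e_1, e'_1, e''_1, e_2, e'_2, e''_2, e_3, … in the stellar subdivision T(Γ'), where e'_i and e''_i are edges incident to the new face-vertices; consequently T(Γ') is z-knotted if and only if Γ' is z-knotted. -/

import Mathlib

open Finset
open scoped Classical

/-- A combinatorial triangulation: a finite collection of (triangular) faces,
each given as a finite set of vertices. -/
structure Triangulation (V : Type) where
  faces : Finset (Finset V)

namespace Triangulation

variable {V : Type} [DecidableEq V] (T : Triangulation V)

/-- The edges: the 2-element subsets of faces. -/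
def edges : Finset (Finset V) := T.faces.biUnion fun f => f.powersetCard 2

/-- The vertices actually used by the triangulation. -/
def verts : Finset V := T.faces.sup id

/-- The combinatorial axioms of a triangulation of a closed surface:
faces are triangles, every edge lies in exactly two faces, and two distinct
faces meet in at most an edge. -/
def IsProper : Prop :=
  (∀ f ∈ T.faces, f.card = 3) ∧
  (∀ e ∈ T.edges, (T.faces.filter fun f => e ⊆ f).card = 2) ∧
  (∀ f ∈ T.faces, ∀ g ∈ T.faces, f ≠ g → (f ∩ g).card ≤ 2)

/-- The underlying (simple) graph of the triangulation. -/
def graph : SimpleGraph V where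
  Adj x y := x ≠ y ∧ ({x, y} : Finset V) ∈ T.edges
  symm := ⟨fun x y h => ⟨h.1.symm, by rw [Finset.pair_comm y x]; exact h.2⟩⟩
  loopless := ⟨fun x h => h.1 rfl⟩

/-- A zigzag: a bi-infinite periodic sequence of edges `e i` together with the
face `f i` containing the consecutive edges `e i` and `e (i+1)`, such that
consecutive faces are distinct and edges two apart are disjoint.
`head i` is the (unique) common vertex of `e i` and `e (i+1)`; thus the `i`-th
traversal goes from `head (i-1)` to `head i`. -/
structure Zigzag where
  e : ℤ → Finset V
  f : ℤ → Finset V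
  head : ℤ → V
  e_mem : ∀ i, e i ∈ T.edges
  f_mem : ∀ i, f i ∈ T.faces
  sub_left : ∀ i, e i ⊆ f i
  sub_right : ∀ i, e (i + 1) ⊆ f i
  edges_ne : ∀ i, e i ≠ e (i + 1)
  faces_ne : ∀ i, f i ≠ f (i + 1)
  disj : ∀ i, Disjoint (e i) (e (i + 2))
  inter_eq : ∀ i, e i ∩ e (i + 1) = {head i}
  exists_period : ∃ n : ℕ, 0 < n ∧ ∀ i, e (i + n) = e i ∧ f (i + n) = f i ∧ head (i + n) = head i

namespace Zigzag

variable {T}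

/-- The length of a zigzag: the minimal period of its edge sequence. -/
noncomputable def length (Z : Zigzag T) : ℕ :=
  sInf {n : ℕ | 0 < n ∧ ∀ i, Z.e (i + n) = Z.e i}

/-- How many times the edge `a` occurs in one (minimal) period of `Z`. -/
noncomputable def mult (Z : Zigzag T) (a : Finset V) : ℕ :=
  ((Finset.range Z.length).filter fun i => Z.e (i : ℤ) = a).card

/-- The direction (tail, head) of the `i`-th traversal of `Z`. -/
def dir (Z : Zigzag T) (i : ℤ) : V × V := (Z.head (i - 1), Z.head i)

/-- Two zigzags are the same cyclic sequence up to rotation or rotation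
combined with reversal. -/
def Equiv (Z W : Zigzag T) : Prop :=
  (∃ k : ℤ, ∀ i, W.e i = Z.e (i + k)) ∨ (∃ k : ℤ, ∀ i, W.e i = Z.e (k - i))

end Zigzag

/-- A triangulation is z-knotted if it has a single zigzag up to
rotation and reversal. -/
def IsZKnotted : Prop := Nonempty (Zigzag T) ∧ ∀ Z W : Zigzag T, Z.Equiv W

/-- A z-orientation: a collection of pairwise non-equivalent zigzags which
double covers the edge set. -/
structure ZOrientation where
  zigzags : List (Zigzag T)
  cover : ∀ a ∈ T.edges, (zigzags.map fun Z => Z.mult a).sum = 2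
  nonequiv : zigzags.Pairwise fun Z W => ¬ Z.Equiv W

namespace ZOrientation

variable {T}

/-- All traversals of the edge `a` by the distinguished zigzags go in the
direction `d`. -/
def dirOf (τ : ZOrientation T) (a : Finset V) (d : V × V) : Prop :=
  ∀ Z ∈ τ.zigzags, ∀ i : ℤ, Z.e i = a → Z.dir i = d

/-- An edge of type II: both traversals go in the same direction. -/
def TypeII (τ : ZOrientation T) (a : Finset V) : Prop := ∃ d, τ.dirOf a d

/-- An edge of type I: the two traversals go in different directions. -/
def TypeI (τ : ZOrientation T) (a : Finset V) : Prop := ¬ τ.TypeII a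

/-- A vertex of type I: it belongs only to edges of type I. -/
def VertexTypeI (τ : ZOrientation T) (x : V) : Prop :=
  ∀ a ∈ T.edges, x ∈ a → τ.TypeI a

/-- A vertex of type II: it belongs to some edge of type II. -/
def VertexTypeII (τ : ZOrientation T) (x : V) : Prop :=
  ∃ a ∈ T.edges, x ∈ a ∧ τ.TypeII a

/-- A face of type I: exactly one of its edges is of type II
(the other two being of type I). -/
def FaceTypeI (τ : ZOrientation T) (f : Finset V) : Prop :=
  ∃! a : Finset V, a ∈ f.powersetCard 2 ∧ τ.TypeII a

/-- A face of type II: all its edges are of type II and their directions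
form a directed cycle. -/
def FaceTypeII (τ : ZOrientation T) (f : Finset V) : Prop :=
  ∃ x y z : V, f = {x, y, z} ∧ x ≠ y ∧ y ≠ z ∧ x ≠ z ∧
    τ.dirOf {x, y} (x, y) ∧ τ.dirOf {y, z} (y, z) ∧ τ.dirOf {z, x} (z, x)

/-- A homogeneous zigzag: it contains precisely two edges of type I after each
edge of type II, i.e. it is a cyclic sequence of blocks (II, I, I). -/
def Homogeneous (τ : ZOrientation T) (Z : Zigzag T) : Prop :=
  ∃ k : ℤ, ∀ i : ℤ, τ.TypeII (Z.e (k + 3 * i)) ∧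
    τ.TypeI (Z.e (k + 3 * i + 1)) ∧ τ.TypeI (Z.e (k + 3 * i + 2))

/-- The in-degree of a vertex in the digraph of type II edges. -/
noncomputable def inDeg (τ : ZOrientation T) (x : V) : ℕ :=
  (T.edges.filter fun a => τ.TypeII a ∧ ∃ u, a = {u, x} ∧ τ.dirOf a (u, x)).card

/-- The out-degree of a vertex in the digraph of type II edges. -/
noncomputable def outDeg (τ : ZOrientation T) (x : V) : ℕ :=
  (T.edges.filter fun a => τ.TypeII a ∧ ∃ u, a = {x, u} ∧ τ.dirOf a (x, u)).card

/-- A special pair: two type II edges with a common vertex which are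
interleaved in the zigzag `Z` as a, b, a, b within one period. -/
def SpecialPair (τ : ZOrientation T) (Z : Zigzag T) (a b : Finset V) : Prop :=
  a ≠ b ∧ (a ∩ b).Nonempty ∧ τ.TypeII a ∧ τ.TypeII b ∧
  ∃ i₁ i₂ i₃ i₄ : ℤ, i₁ < i₂ ∧ i₂ < i₃ ∧ i₃ < i₄ ∧ i₄ < i₁ + (Z.length : ℤ) ∧
    Z.e i₁ = a ∧ Z.e i₂ = b ∧ Z.e i₃ = a ∧ Z.e i₄ = b

/-- Two special pairs `c₁,c₂` and `t₁,t₂` are concordant: the zigzag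
interleaves them in the cyclic pattern c₁,t₁,c₂,t₂,c₁,t₁,c₂,t₂. -/
def Concordant (τ : ZOrientation T) (Z : Zigzag T) (c₁ c₂ t₁ t₂ : Finset V) : Prop :=
  τ.SpecialPair Z c₁ c₂ ∧ τ.SpecialPair Z t₁ t₂ ∧
  (c₁ ≠ t₁ ∧ c₁ ≠ t₂ ∧ c₂ ≠ t₁ ∧ c₂ ≠ t₂) ∧
  ∃ i₁ i₂ i₃ i₄ i₅ i₆ i₇ i₈ : ℤ,
    i₁ < i₂ ∧ i₂ < i₃ ∧ i₃ < i₄ ∧ i₄ < i₅ ∧ i₅ < i₆ ∧ i₆ < i₇ ∧ i₇ < i₈ ∧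
    i₈ < i₁ + (Z.length : ℤ) ∧
    Z.e i₁ = c₁ ∧ Z.e i₂ = t₁ ∧ Z.e i₃ = c₂ ∧ Z.e i₄ = t₂ ∧
    Z.e i₅ = c₁ ∧ Z.e i₆ = t₁ ∧ Z.e i₇ = c₂ ∧ Z.e i₈ = t₂

end ZOrientation

end Triangulation

/-- The stellar subdivision of a triangulation: add a new vertex inside each
face and join it to the three vertices of the face. -/
def stellar {V : Type} [DecidableEq V] (T : Triangulation V) :
    Triangulation (V ⊕ {f : Finset V // f ∈ T.faces}) where
  faces := T.faces.attach.biUnion fun f =>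
    (f.1.powersetCard 2).image fun a =>
      insert (Sum.inr f) (a.image (Sum.inl : V → V ⊕ {f : Finset V // f ∈ T.faces}))


/-! ### Auxiliary development -/

section Aux

open Sum

variable {V : Type} [DecidableEq V] {T : Triangulation V}

lemma mem_edges_iff {a : Finset V} :
    a ∈ T.edges ↔ ∃ f ∈ T.faces, a ⊆ f ∧ a.card = 2 := by
  simp [Triangulation.edges, Finset.mem_biUnion, Finset.mem_powersetCard]

lemma mem_edges_of {f a : Finset V} (hf : f ∈ T.faces) (ha : a ⊆ f) (h2 : a.card = 2) :
    a ∈ T.edges := mem_edges_iff.2 ⟨f, hf, ha, h2⟩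

lemma edge_card {a : Finset V} (h : a ∈ T.edges) : a.card = 2 := by
  obtain ⟨f, _, _, h2⟩ := mem_edges_iff.1 h
  exact h2

namespace Triangulation.Zigzag

variable (Z : T.Zigzag)

lemma e_card (i : ℤ) : (Z.e i).card = 2 := edge_card (Z.e_mem i)

lemma head_mem_left (i : ℤ) : Z.head i ∈ Z.e i := by
  have := Z.inter_eq i
  have : Z.head i ∈ Z.e i ∩ Z.e (i + 1) := by rw [this]; simp
  exact (Finset.mem_inter.1 this).1

lemma head_mem_right (i : ℤ) : Z.head i ∈ Z.e (i + 1) := by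
  have := Z.inter_eq i
  have : Z.head i ∈ Z.e i ∩ Z.e (i + 1) := by rw [this]; simp
  exact (Finset.mem_inter.1 this).2

lemma head_ne_head_succ (i : ℤ) : Z.head i ≠ Z.head (i + 1) := by
  intro h
  have h1 : Z.head i ∈ Z.e i := Z.head_mem_left i
  have h2 : Z.head (i + 1) ∈ Z.e (i + 2) := by
    have := Z.head_mem_right (i + 1)
    convert this using 2
    ring
  rw [h] at h1
  exact (Finset.disjoint_left.1 (Z.disj i)) h1 h2

lemma head_pred_mem (i : ℤ) : Z.head (i - 1) ∈ Z.e i := by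
  have := Z.head_mem_right (i - 1)
  simpa using this

lemma head_pred_ne_head (i : ℤ) : Z.head (i - 1) ≠ Z.head i := by
  have := Z.head_ne_head_succ (i - 1)
  simpa using this

lemma e_eq_pair (i : ℤ) : Z.e i = {Z.head (i - 1), Z.head i} := by
  have hsub : ({Z.head (i - 1), Z.head i} : Finset V) ⊆ Z.e i := by
    intro x hx
    rcases Finset.mem_insert.1 hx with h | h
    · subst h; exact Z.head_pred_mem i
    · rw [Finset.mem_singleton.1 h]; exact Z.head_mem_left i
  have hcard : ({Z.head (i - 1), Z.head i} : Finset V).card = 2 := by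
    rw [Finset.card_insert_of_notMem (by simp [Z.head_pred_ne_head i]), Finset.card_singleton]
  exact (Finset.eq_of_subset_of_card_le hsub (by rw [Z.e_card i, hcard])).symm

lemma f_eq_union (hT : T.IsProper) (i : ℤ) : Z.f i = Z.e i ∪ Z.e (i + 1) := by
  have hsub : Z.e i ∪ Z.e (i + 1) ⊆ Z.f i :=
    Finset.union_subset (Z.sub_left i) (Z.sub_right i)
  have hcard : (Z.e i ∪ Z.e (i + 1)).card = 3 := by
    have h := Finset.card_union_add_card_inter (Z.e i) (Z.e (i + 1))
    rw [Z.inter_eq i, Z.e_card, Z.e_card, Finset.card_singleton] at h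
    omega
  have hf : (Z.f i).card = 3 := hT.1 _ (Z.f_mem i)
  exact (Finset.eq_of_subset_of_card_le hsub (by omega)).symm

end Triangulation.Zigzag


/-! ### Structure of the stellar subdivision -/

/-- Extract the `inl` part of a finset of the sum type. -/
noncomputable def leftOf (s : Finset (V ⊕ {f : Finset V // f ∈ T.faces})) : Finset V :=
  s.biUnion fun v => Sum.elim (fun x => {x}) (fun _ => ∅) v

/-- Extract the face corresponding to the (unique) `inr` element. -/
noncomputable def faceOf (s : Finset (V ⊕ {f : Finset V // f ∈ T.faces})) : Finset V :=
  s.biUnion fun v => Sum.elim (fun _ => ∅) (fun c => c.1) v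

lemma mem_leftOf {s : Finset (V ⊕ {f : Finset V // f ∈ T.faces})} {x : V} :
    x ∈ leftOf s ↔ Sum.inl x ∈ s := by
  simp only [leftOf, Finset.mem_biUnion]
  constructor
  · rintro ⟨v, hv, hx⟩
    cases v with
    | inl y => simp at hx; subst hx; exact hv
    | inr c => simp at hx
  · intro h; exact ⟨Sum.inl x, h, by simp⟩

lemma mem_faceOf {s : Finset (V ⊕ {f : Finset V // f ∈ T.faces})} {x : V} :
    x ∈ faceOf s ↔ ∃ c, Sum.inr c ∈ s ∧ x ∈ c.1 := by
  simp only [faceOf, Finset.mem_biUnion]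
  constructor
  · rintro ⟨v, hv, hx⟩
    cases v with
    | inl y => simp at hx
    | inr c => exact ⟨c, hv, by simpa using hx⟩
  · rintro ⟨c, hc, hx⟩; exact ⟨Sum.inr c, hc, by simpa using hx⟩

lemma leftOf_image_inl (a : Finset V) :
    leftOf (T := T) (a.image Sum.inl) = a := by
  ext x; simp [mem_leftOf]

lemma inr_not_mem_image_inl {a : Finset V} {c : {f : Finset V // f ∈ T.faces}} :
    Sum.inr c ∉ a.image (Sum.inl : V → V ⊕ {f : Finset V // f ∈ T.faces}) := by
  simp

lemma leftOf_insert_inr (c : {f : Finset V // f ∈ T.faces})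
    (s : Finset (V ⊕ {f : Finset V // f ∈ T.faces})) :
    leftOf (insert (Sum.inr c) s) = leftOf s := by
  ext x; simp [mem_leftOf]

lemma faceOf_stellar_face (c : {f : Finset V // f ∈ T.faces}) (a : Finset V) :
    faceOf (insert (Sum.inr c) (a.image Sum.inl)) = c.1 := by
  ext x
  rw [mem_faceOf]
  constructor
  · rintro ⟨c', hc', hx⟩
    rcases Finset.mem_insert.1 hc' with h | h
    · cases Sum.inr_injective h.symm; exact hx
    · exact absurd h inr_not_mem_image_inl
  · intro hx; exact ⟨c, by simp, hx⟩

lemma stellar_face_mem {f : Finset V} (hf : f ∈ T.faces) {a : Finset V}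
    (ha : a ⊆ f) (h2 : a.card = 2) :
    insert (Sum.inr ⟨f, hf⟩) (a.image Sum.inl) ∈ (stellar T).faces := by
  simp only [stellar, Finset.mem_biUnion, Finset.mem_attach, Finset.mem_image, true_and]
  exact ⟨⟨f, hf⟩, a, Finset.mem_powersetCard.2 ⟨ha, h2⟩, rfl⟩

lemma stellar_face_struct {g : Finset (V ⊕ {f : Finset V // f ∈ T.faces})}
    (hg : g ∈ (stellar T).faces) :
    ∃ (c : {f : Finset V // f ∈ T.faces}) (a : Finset V),
      a ⊆ c.1 ∧ a.card = 2 ∧ g = insert (Sum.inr c) (a.image Sum.inl) := by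
  simp only [stellar, Finset.mem_biUnion, Finset.mem_attach, Finset.mem_image, true_and] at hg
  obtain ⟨c, a, ha, rfl⟩ := hg
  rw [Finset.mem_powersetCard] at ha
  exact ⟨c, a, ha.1, ha.2, rfl⟩

lemma stellar_face_card {c : {f : Finset V // f ∈ T.faces}} {a : Finset V} (h2 : a.card = 2) :
    (insert (Sum.inr c) (a.image (Sum.inl : V → V ⊕ {f : Finset V // f ∈ T.faces}))).card = 3 := by
  rw [Finset.card_insert_of_notMem inr_not_mem_image_inl,
    Finset.card_image_of_injective _ Sum.inl_injective, h2]

lemma stellar_face_inj {c c' : {f : Finset V // f ∈ T.faces}} {a a' : Finset V}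
    (h : insert (Sum.inr c) (a.image (Sum.inl : V → V ⊕ {f : Finset V // f ∈ T.faces}))
      = insert (Sum.inr c') (a'.image Sum.inl)) :
    c = c' ∧ a = a' := by
  constructor
  · have : Sum.inr c ∈ insert (Sum.inr c') (a'.image Sum.inl) := by rw [← h]; simp
    rcases Finset.mem_insert.1 this with h' | h'
    · exact Sum.inr_injective h'
    · exact absurd h' inr_not_mem_image_inl
  · have := congrArg (leftOf (T := T)) h
    rwa [leftOf_insert_inr, leftOf_insert_inr, leftOf_image_inl, leftOf_image_inl] at this

/-- A 2-subset of a stellar face is either the "old" edge or a spoke. -/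
lemma subset_stellar_face {c : {f : Finset V // f ∈ T.faces}} {a : Finset V} (h2 : a.card = 2)
    {s : Finset (V ⊕ {f : Finset V // f ∈ T.faces})}
    (hs : s ⊆ insert (Sum.inr c) (a.image Sum.inl)) (hcard : s.card = 2) :
    s = a.image Sum.inl ∨ ∃ x ∈ a, s = {Sum.inr c, Sum.inl x} := by
  by_cases hc : Sum.inr c ∈ s
  · right
    have herase : s.erase (Sum.inr c) ⊆ a.image Sum.inl := by
      intro v hv
      have hvs := Finset.mem_of_mem_erase hv
      have hvne := Finset.ne_of_mem_erase hv
      rcases Finset.mem_insert.1 (hs hvs) with h | h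
      · exact absurd h hvne
      · exact h
    have hcard1 : (s.erase (Sum.inr c)).card = 1 := by
      rw [Finset.card_erase_of_mem hc, hcard]
    obtain ⟨v, hv⟩ := Finset.card_eq_one.1 hcard1
    have hvmem : v ∈ a.image Sum.inl := herase (by rw [hv]; simp)
    obtain ⟨x, hx, rfl⟩ := Finset.mem_image.1 hvmem
    refine ⟨x, hx, ?_⟩
    have := Finset.insert_erase hc
    rw [hv] at this
    exact this.symm
  · left
    have hsub : s ⊆ a.image Sum.inl := by
      intro v hv
      rcases Finset.mem_insert.1 (hs hv) with h | h
      · exact absurd (h ▸ hv) hc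
      · exact h
    refine Finset.eq_of_subset_of_card_le hsub ?_
    rw [Finset.card_image_of_injective _ Sum.inl_injective, h2, hcard]


/-! ### The lifted zigzag -/

lemma int_cases3 (P : ℤ → Prop) (h : ∀ i : ℤ, P (3 * i) ∧ P (3 * i + 1) ∧ P (3 * i + 2)) :
    ∀ j : ℤ, P j := by
  intro j
  obtain ⟨i, r, hr, rfl⟩ : ∃ i r : ℤ, (r = 0 ∨ r = 1 ∨ r = 2) ∧ j = 3 * i + r :=
    ⟨j / 3, j % 3, by omega, by omega⟩
  rcases hr with rfl | rfl | rfl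
  · simpa using (h i).1
  · exact (h i).2.1
  · exact (h i).2.2

namespace Triangulation.Zigzag

variable (Z : T.Zigzag)

lemma head_pred_ne_head_succ (i : ℤ) : Z.head (i - 1) ≠ Z.head (i + 1) := by
  intro h
  have h1 : Z.head (i - 1) ∈ Z.e i := Z.head_pred_mem i
  have h2 : Z.head (i + 1) ∈ Z.e (i + 1) := Z.head_mem_left (i + 1)
  rw [← h] at h2
  have : Z.head (i - 1) ∈ Z.e i ∩ Z.e (i + 1) := Finset.mem_inter.2 ⟨h1, h2⟩
  rw [Z.inter_eq i] at this
  exact Z.head_pred_ne_head i (Finset.mem_singleton.1 this)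

lemma mem_e_succ_head (i : ℤ) : Z.head (i + 1) ∈ Z.e (i + 1) := by
  have := Z.head_pred_mem (i + 1 + 1)
  simpa using Z.head_mem_left (i + 1)

/-- The centre of the face `Z.f i`, as a vertex of the stellar subdivision. -/
def fc (i : ℤ) : {f : Finset V // f ∈ T.faces} := ⟨Z.f i, Z.f_mem i⟩

/-- The edge sequence of the lifted zigzag. -/
noncomputable def liftE (j : ℤ) : Finset (V ⊕ {f : Finset V // f ∈ T.faces}) :=
  if j % 3 = 0 then (Z.e (j / 3)).image Sum.inl
  else if j % 3 = 1 then {Sum.inl (Z.head (j / 3 - 1)), Sum.inr (Z.fc (j / 3))}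
  else {Sum.inr (Z.fc (j / 3)), Sum.inl (Z.head (j / 3 + 1))}

/-- The face sequence of the lifted zigzag. -/
noncomputable def liftF (j : ℤ) : Finset (V ⊕ {f : Finset V // f ∈ T.faces}) :=
  if j % 3 = 0 then insert (Sum.inr (Z.fc (j / 3))) ((Z.e (j / 3)).image Sum.inl)
  else if j % 3 = 1 then insert (Sum.inr (Z.fc (j / 3)))
    (({Z.head (j / 3 - 1), Z.head (j / 3 + 1)} : Finset V).image Sum.inl)
  else insert (Sum.inr (Z.fc (j / 3))) ((Z.e (j / 3 + 1)).image Sum.inl)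

/-- The head sequence of the lifted zigzag. -/
noncomputable def liftH (j : ℤ) : V ⊕ {f : Finset V // f ∈ T.faces} :=
  if j % 3 = 0 then Sum.inl (Z.head (j / 3 - 1))
  else if j % 3 = 1 then Sum.inr (Z.fc (j / 3))
  else Sum.inl (Z.head (j / 3 + 1))

lemma liftE0 {j i : ℤ} (h : j = 3 * i) : Z.liftE j = (Z.e i).image Sum.inl := by
  subst h
  have h1 : (3 * i) % 3 = 0 := by omega
  have h2 : (3 * i) / 3 = i := by omega
  simp [liftE, h1, h2]

lemma liftE1 {j i : ℤ} (h : j = 3 * i + 1) :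
    Z.liftE j = {Sum.inl (Z.head (i - 1)), Sum.inr (Z.fc i)} := by
  subst h
  have h1 : (3 * i + 1) % 3 = 1 := by omega
  have h2 : (3 * i + 1) / 3 = i := by omega
  simp [liftE, h1, h2]

lemma liftE2 {j i : ℤ} (h : j = 3 * i + 2) :
    Z.liftE j = {Sum.inr (Z.fc i), Sum.inl (Z.head (i + 1))} := by
  subst h
  have h1 : (3 * i + 2) % 3 = 2 := by omega
  have h2 : (3 * i + 2) / 3 = i := by omega
  simp [liftE, h1, h2]

lemma liftF0 {j i : ℤ} (h : j = 3 * i) :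
    Z.liftF j = insert (Sum.inr (Z.fc i)) ((Z.e i).image Sum.inl) := by
  subst h
  have h1 : (3 * i) % 3 = 0 := by omega
  have h2 : (3 * i) / 3 = i := by omega
  simp [liftF, h1, h2]

lemma liftF1 {j i : ℤ} (h : j = 3 * i + 1) :
    Z.liftF j = insert (Sum.inr (Z.fc i))
      (({Z.head (i - 1), Z.head (i + 1)} : Finset V).image Sum.inl) := by
  subst h
  have h1 : (3 * i + 1) % 3 = 1 := by omega
  have h2 : (3 * i + 1) / 3 = i := by omega
  simp [liftF, h1, h2]

lemma liftF2 {j i : ℤ} (h : j = 3 * i + 2) :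
    Z.liftF j = insert (Sum.inr (Z.fc i)) ((Z.e (i + 1)).image Sum.inl) := by
  subst h
  have h1 : (3 * i + 2) % 3 = 2 := by omega
  have h2 : (3 * i + 2) / 3 = i := by omega
  simp [liftF, h1, h2]

lemma liftH0 {j i : ℤ} (h : j = 3 * i) : Z.liftH j = Sum.inl (Z.head (i - 1)) := by
  subst h
  have h1 : (3 * i) % 3 = 0 := by omega
  have h2 : (3 * i) / 3 = i := by omega
  simp [liftH, h1, h2]

lemma liftH1 {j i : ℤ} (h : j = 3 * i + 1) : Z.liftH j = Sum.inr (Z.fc i) := by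
  subst h
  have h1 : (3 * i + 1) % 3 = 1 := by omega
  have h2 : (3 * i + 1) / 3 = 1 * i := by omega
  simp [liftH, h1, h2]

lemma liftH2 {j i : ℤ} (h : j = 3 * i + 2) : Z.liftH j = Sum.inl (Z.head (i + 1)) := by
  subst h
  have h1 : (3 * i + 2) % 3 = 2 := by omega
  have h2 : (3 * i + 2) / 3 = i := by omega
  simp [liftH, h1, h2]

lemma lift_f_mem (j : ℤ) : Z.liftF j ∈ (stellar T).faces := by
  induction j using int_cases3 with
  | h i =>
  refine ⟨?_, ?_, ?_⟩
  · rw [Z.liftF0 rfl]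
    exact stellar_face_mem (Z.f_mem i) (Z.sub_left i) (Z.e_card i)
  · rw [Z.liftF1 rfl]
    refine stellar_face_mem (Z.f_mem i) ?_ ?_
    · intro v hv
      rcases Finset.mem_insert.1 hv with h | h
      · subst h; exact Z.sub_left i (Z.head_pred_mem i)
      · rw [Finset.mem_singleton.1 h]; exact Z.sub_right i (Z.head_mem_left (i + 1))
    · rw [Finset.card_insert_of_notMem (by simp [Z.head_pred_ne_head_succ i]),
        Finset.card_singleton]
  · rw [Z.liftF2 rfl]
    refine stellar_face_mem (Z.f_mem i) (Z.sub_right i) (Z.e_card (i + 1))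

lemma lift_sub_left (j : ℤ) : Z.liftE j ⊆ Z.liftF j := by
  induction j using int_cases3 with
  | h i =>
  refine ⟨?_, ?_, ?_⟩
  · rw [Z.liftE0 rfl, Z.liftF0 rfl]
    exact Finset.subset_insert _ _
  · rw [Z.liftE1 rfl, Z.liftF1 rfl]
    intro v hv
    rcases Finset.mem_insert.1 hv with h | h
    · subst h; exact Finset.mem_insert_of_mem (by simp)
    · rw [Finset.mem_singleton.1 h]; exact Finset.mem_insert_self _ _
  · rw [Z.liftE2 rfl, Z.liftF2 rfl]
    intro v hv
    rcases Finset.mem_insert.1 hv with h | h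
    · subst h; exact Finset.mem_insert_self _ _
    · rw [Finset.mem_singleton.1 h]
      exact Finset.mem_insert_of_mem
        (Finset.mem_image_of_mem _ (Z.head_mem_left (i + 1)))

lemma lift_sub_right (j : ℤ) : Z.liftE (j + 1) ⊆ Z.liftF j := by
  induction j using int_cases3 with
  | h i =>
  refine ⟨?_, ?_, ?_⟩
  · rw [Z.liftE1 rfl, Z.liftF0 rfl]
    intro v hv
    rcases Finset.mem_insert.1 hv with h | h
    · subst h
      exact Finset.mem_insert_of_mem (Finset.mem_image_of_mem _ (Z.head_pred_mem i))
    · rw [Finset.mem_singleton.1 h]; exact Finset.mem_insert_self _ _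
  · rw [Z.liftE2 (by ring), Z.liftF1 rfl]
    intro v hv
    rcases Finset.mem_insert.1 hv with h | h
    · subst h; exact Finset.mem_insert_self _ _
    · rw [Finset.mem_singleton.1 h]
      exact Finset.mem_insert_of_mem (Finset.mem_image_of_mem _ (by simp))
  · rw [Z.liftE0 (show 3 * i + 2 + 1 = 3 * (i + 1) by ring), Z.liftF2 rfl]
    exact Finset.subset_insert _ _

lemma lift_e_card (j : ℤ) : (Z.liftE j).card = 2 := by
  induction j using int_cases3 with
  | h i =>
  refine ⟨?_, ?_, ?_⟩
  · rw [Z.liftE0 rfl, Finset.card_image_of_injective _ Sum.inl_injective]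
    exact Z.e_card i
  · rw [Z.liftE1 rfl]
    rw [Finset.card_insert_of_notMem (by simp), Finset.card_singleton]
  · rw [Z.liftE2 rfl]
    rw [Finset.card_insert_of_notMem (by simp), Finset.card_singleton]

lemma lift_e_mem (j : ℤ) : Z.liftE j ∈ (stellar T).edges :=
  mem_edges_of (Z.lift_f_mem j) (Z.lift_sub_left j) (Z.lift_e_card j)

lemma fc_ne_fc_succ (i : ℤ) : Z.fc i ≠ Z.fc (i + 1) := by
  intro h
  exact Z.faces_ne i (congrArg Subtype.val h)

lemma not_mem_e_head_succ (i : ℤ) : Z.head (i + 1) ∉ Z.e i := by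
  rw [Z.e_eq_pair i]
  simp only [Finset.mem_insert, Finset.mem_singleton]
  push_neg
  exact ⟨(Z.head_pred_ne_head_succ i).symm, (Z.head_ne_head_succ i).symm⟩

lemma not_mem_e_head_pred (i : ℤ) : Z.head (i - 1) ∉ Z.e (i + 1) := by
  rw [Z.e_eq_pair (i + 1)]
  simp only [Finset.mem_insert, Finset.mem_singleton, add_sub_cancel_right]
  push_neg
  exact ⟨Z.head_pred_ne_head i, Z.head_pred_ne_head_succ i⟩

lemma lift_edges_ne (j : ℤ) : Z.liftE j ≠ Z.liftE (j + 1) := by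
  induction j using int_cases3 with
  | h i =>
  refine ⟨?_, ?_, ?_⟩
  · rw [Z.liftE0 rfl, Z.liftE1 rfl]
    intro h
    have : Sum.inr (Z.fc i) ∈ (Z.e i).image
        (Sum.inl : V → V ⊕ {f : Finset V // f ∈ T.faces}) := by
      rw [h]; simp
    exact inr_not_mem_image_inl this
  · rw [Z.liftE1 rfl, Z.liftE2 (by ring)]
    intro h
    have : Sum.inl (Z.head (i - 1)) ∈
        ({Sum.inr (Z.fc i), Sum.inl (Z.head (i + 1))} :
          Finset (V ⊕ {f : Finset V // f ∈ T.faces})) := by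
      rw [← h]; simp
    simp only [Finset.mem_insert, Finset.mem_singleton] at this
    rcases this with h' | h'
    · exact absurd h' (by simp)
    · exact Z.head_pred_ne_head_succ i (Sum.inl_injective h')
  · rw [Z.liftE2 rfl, Z.liftE0 (show 3 * i + 2 + 1 = 3 * (i + 1) by ring)]
    intro h
    have : Sum.inr (Z.fc i) ∈ (Z.e (i + 1)).image
        (Sum.inl : V → V ⊕ {f : Finset V // f ∈ T.faces}) := by
      rw [← h]; simp
    exact inr_not_mem_image_inl this

lemma lift_faces_ne (j : ℤ) : Z.liftF j ≠ Z.liftF (j + 1) := by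
  induction j using int_cases3 with
  | h i =>
  refine ⟨?_, ?_, ?_⟩
  · rw [Z.liftF0 rfl, Z.liftF1 rfl]
    intro h
    have := (stellar_face_inj h).2
    have hz : Z.head (i + 1) ∈ Z.e i := by rw [this]; simp
    exact Z.not_mem_e_head_succ i hz
  · rw [Z.liftF1 rfl, Z.liftF2 (by ring)]
    intro h
    have := (stellar_face_inj h).2
    have hx : Z.head (i - 1) ∈ Z.e (i + 1) := by rw [← this]; simp
    exact Z.not_mem_e_head_pred i hx
  · rw [Z.liftF2 rfl, Z.liftF0 (show 3 * i + 2 + 1 = 3 * (i + 1) by ring)]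
    intro h
    exact Z.fc_ne_fc_succ i (stellar_face_inj h).1

lemma lift_disj (j : ℤ) : Disjoint (Z.liftE j) (Z.liftE (j + 2)) := by
  induction j using int_cases3 with
  | h i =>
  refine ⟨?_, ?_, ?_⟩
  · rw [Z.liftE0 rfl, Z.liftE2 (by ring)]
    rw [Finset.disjoint_left]
    intro v hv1 hv2
    obtain ⟨x, hx, rfl⟩ := Finset.mem_image.1 hv1
    simp only [Finset.mem_insert, Finset.mem_singleton] at hv2
    rcases hv2 with h' | h'
    · exact absurd h' (by simp)
    · rw [Sum.inl_injective h'] at hx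
      exact Z.not_mem_e_head_succ i hx
  · rw [Z.liftE1 rfl, Z.liftE0 (show 3 * i + 1 + 2 = 3 * (i + 1) by ring)]
    rw [Finset.disjoint_left]
    intro v hv1 hv2
    obtain ⟨x, hx, rfl⟩ := Finset.mem_image.1 hv2
    simp only [Finset.mem_insert, Finset.mem_singleton] at hv1
    rcases hv1 with h' | h'
    · rw [Sum.inl_injective h'] at hx
      exact Z.not_mem_e_head_pred i hx
    · exact absurd h' (by simp)
  · rw [Z.liftE2 rfl, Z.liftE1 (show 3 * i + 2 + 2 = 3 * (i + 1) + 1 by ring)]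
    have hi : i + 1 - 1 = i := by ring
    rw [hi, Finset.disjoint_left]
    intro v hv1 hv2
    simp only [Finset.mem_insert, Finset.mem_singleton] at hv1 hv2
    rcases hv1 with h1 | h1 <;> rcases hv2 with h2 | h2
    · rw [h1] at h2; exact absurd h2 (by simp)
    · rw [h1] at h2
      exact Z.fc_ne_fc_succ i (Sum.inr_injective h2)
    · rw [h1] at h2
      exact Z.head_ne_head_succ i (Sum.inl_injective h2).symm
    · rw [h1] at h2; exact absurd h2 (by simp)

lemma lift_inter_eq (j : ℤ) : Z.liftE j ∩ Z.liftE (j + 1) = {Z.liftH j} := by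
  induction j using int_cases3 with
  | h i =>
  refine ⟨?_, ?_, ?_⟩
  · rw [Z.liftE0 rfl, Z.liftE1 rfl, Z.liftH0 rfl]
    ext v
    simp only [Finset.mem_inter, Finset.mem_insert, Finset.mem_singleton, Finset.mem_image]
    constructor
    · rintro ⟨⟨x, hx, rfl⟩, h | h⟩
      · exact h
      · exact absurd h (by simp)
    · rintro rfl
      exact ⟨⟨_, Z.head_pred_mem i, rfl⟩, Or.inl rfl⟩
  · rw [Z.liftE1 rfl, Z.liftE2 (by ring), Z.liftH1 rfl]
    ext v
    simp only [Finset.mem_inter, Finset.mem_insert, Finset.mem_singleton]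
    constructor
    · rintro ⟨h1 | h1, h2 | h2⟩
      · rw [h1] at h2; exact absurd h2 (by simp)
      · rw [h1] at h2
        exact absurd (Sum.inl_injective h2) (Z.head_pred_ne_head_succ i)
      · exact h1
      · exact h1
    · rintro rfl
      exact ⟨Or.inr rfl, Or.inl rfl⟩
  · rw [Z.liftE2 rfl, Z.liftE0 (show 3 * i + 2 + 1 = 3 * (i + 1) by ring), Z.liftH2 rfl]
    ext v
    simp only [Finset.mem_inter, Finset.mem_insert, Finset.mem_singleton, Finset.mem_image]
    constructor
    · rintro ⟨h1 | h1, x, hx, rfl⟩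
      · exact absurd h1 (by simp)
      · exact h1
    · rintro rfl
      exact ⟨Or.inr rfl, ⟨_, Z.head_mem_left (i + 1), rfl⟩⟩

lemma fc_period {n : ℕ} (hF : ∀ i : ℤ, Z.f (i + n) = Z.f i) (i : ℤ) :
    Z.fc (i + n) = Z.fc i := Subtype.ext (hF i)

lemma lift_period {n : ℕ} (hE : ∀ i : ℤ, Z.e (i + n) = Z.e i)
    (hF : ∀ i : ℤ, Z.f (i + n) = Z.f i) (hH : ∀ i : ℤ, Z.head (i + n) = Z.head i) :
    ∀ j : ℤ, Z.liftE (j + 3 * n) = Z.liftE j ∧ Z.liftF (j + 3 * n) = Z.liftF j ∧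
      Z.liftH (j + 3 * n) = Z.liftH j := by
  have hH' : ∀ i : ℤ, Z.head (i + n - 1) = Z.head (i - 1) := fun i => by
    rw [show i + (n : ℤ) - 1 = (i - 1) + n by ring, hH]
  have hH'' : ∀ i : ℤ, Z.head (i + n + 1) = Z.head (i + 1) := fun i => by
    rw [show i + (n : ℤ) + 1 = (i + 1) + n by ring, hH]
  have hE' : ∀ i : ℤ, Z.e (i + n + 1) = Z.e (i + 1) := fun i => by
    rw [show i + (n : ℤ) + 1 = (i + 1) + n by ring, hE]
  intro j
  induction j using int_cases3 with
  | h i =>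
  refine ⟨?_, ?_, ?_⟩ <;> refine ⟨?_, ?_, ?_⟩
  · rw [Z.liftE0 (show 3 * i + 3 * (n : ℤ) = 3 * (i + n) by ring), Z.liftE0 rfl, hE]
  · rw [Z.liftF0 (show 3 * i + 3 * (n : ℤ) = 3 * (i + n) by ring), Z.liftF0 rfl,
      hE, Z.fc_period hF]
  · rw [Z.liftH0 (show 3 * i + 3 * (n : ℤ) = 3 * (i + n) by ring), Z.liftH0 rfl, hH']
  · rw [Z.liftE1 (show 3 * i + 1 + 3 * (n : ℤ) = 3 * (i + n) + 1 by ring), Z.liftE1 rfl,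
      hH', Z.fc_period hF]
  · rw [Z.liftF1 (show 3 * i + 1 + 3 * (n : ℤ) = 3 * (i + n) + 1 by ring), Z.liftF1 rfl,
      hH', hH'', Z.fc_period hF]
  · rw [Z.liftH1 (show 3 * i + 1 + 3 * (n : ℤ) = 3 * (i + n) + 1 by ring), Z.liftH1 rfl,
      Z.fc_period hF]
  · rw [Z.liftE2 (show 3 * i + 2 + 3 * (n : ℤ) = 3 * (i + n) + 2 by ring), Z.liftE2 rfl,
      hH'', Z.fc_period hF]
  · rw [Z.liftF2 (show 3 * i + 2 + 3 * (n : ℤ) = 3 * (i + n) + 2 by ring), Z.liftF2 rfl,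
      hE', Z.fc_period hF]
  · rw [Z.liftH2 (show 3 * i + 2 + 3 * (n : ℤ) = 3 * (i + n) + 2 by ring), Z.liftH2 rfl, hH'']

/-- The lift of a zigzag to the stellar subdivision. -/
noncomputable def lift : (stellar T).Zigzag where
  e := Z.liftE
  f := Z.liftF
  head := Z.liftH
  e_mem := Z.lift_e_mem
  f_mem := Z.lift_f_mem
  sub_left := Z.lift_sub_left
  sub_right := Z.lift_sub_right
  edges_ne := Z.lift_edges_ne
  faces_ne := Z.lift_faces_ne
  disj := Z.lift_disj
  inter_eq := Z.lift_inter_eq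
  exists_period := by
    obtain ⟨n, hn, hper⟩ := Z.exists_period
    refine ⟨3 * n, by omega, fun j => ?_⟩
    have := Z.lift_period (fun i => (hper i).1) (fun i => (hper i).2.1)
      (fun i => (hper i).2.2) j
    have hc : ((3 * n : ℕ) : ℤ) = 3 * (n : ℤ) := by push_cast; ring
    rw [hc]
    exact this

end Triangulation.Zigzag

/-! ### Pattern analysis of zigzags in the stellar subdivision -/

/-- An "old" edge: one containing no centre vertex. -/
def noRight (s : Finset (V ⊕ {f : Finset V // f ∈ T.faces})) : Prop :=
  ∀ c, Sum.inr c ∉ s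

lemma noRight_image_inl (a : Finset V) :
    noRight (T := T) (a.image Sum.inl) := fun c hc => inr_not_mem_image_inl hc

lemma face_two_edges (W : (stellar T).Zigzag) (j : ℤ) :
    ∃ (c : {f : Finset V // f ∈ T.faces}) (b : Finset V),
      b ⊆ c.1 ∧ b.card = 2 ∧ W.f j = insert (Sum.inr c) (b.image Sum.inl) ∧
      (W.e j = b.image Sum.inl ∨ ∃ x ∈ b, W.e j = {Sum.inr c, Sum.inl x}) ∧
      (W.e (j + 1) = b.image Sum.inl ∨ ∃ x ∈ b, W.e (j + 1) = {Sum.inr c, Sum.inl x}) := by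
  obtain ⟨c, b, hbc, hb2, hf⟩ := stellar_face_struct (W.f_mem j)
  refine ⟨c, b, hbc, hb2, hf, ?_, ?_⟩
  · exact subset_stellar_face hb2 (hf ▸ W.sub_left j) (W.e_card j)
  · exact subset_stellar_face hb2 (hf ▸ W.sub_right j) (W.e_card (j + 1))

lemma not_old_old (W : (stellar T).Zigzag) {j : ℤ}
    (h1 : noRight (W.e j)) (h2 : noRight (W.e (j + 1))) : False := by
  obtain ⟨c, b, _, _, _, hej, hej1⟩ := face_two_edges W j
  rcases hej with hej | ⟨x, _, hej⟩
  · rcases hej1 with hej1 | ⟨y, _, hej1⟩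
    · exact W.edges_ne j (hej.trans hej1.symm)
    · exact h2 c (by rw [hej1]; simp)
  · exact h1 c (by rw [hej]; simp)

lemma not_old_skip (hT : T.IsProper) (W : (stellar T).Zigzag) {j : ℤ}
    (h1 : noRight (W.e j)) (h2 : noRight (W.e (j + 2))) : False := by
  obtain ⟨c, b, hbc, hb2, _, hej, hej1⟩ := face_two_edges W j
  rcases hej with hej | ⟨x, _, hej⟩
  swap
  · exact h1 c (by rw [hej]; simp)
  rcases hej1 with hej1 | ⟨x, _, hej1⟩
  · exact W.edges_ne j (hej.trans hej1.symm)
  obtain ⟨c', b', hbc', hb2', _, he1, he2⟩ := face_two_edges W (j + 1)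
  rcases he1 with he1 | ⟨x', _, he1⟩
  · exact noRight_image_inl b' c (he1 ▸ (by rw [hej1]; simp : Sum.inr c ∈ W.e (j + 1)))
  have hcc : c = c' := by
    have : Sum.inr c ∈ W.e (j + 1) := by rw [hej1]; simp
    rw [he1] at this
    rcases Finset.mem_insert.1 this with h | h
    · exact Sum.inr_injective h
    · exact absurd h (by simp)
  rcases he2 with he2 | ⟨y, _, he2⟩
  swap
  · exact h2 c' (by rw [show j + 2 = j + 1 + 1 by ring, he2]; simp)
  rw [show j + 1 + 1 = j + 2 by ring] at he2
  have hdisj : Disjoint b b' := by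
    rw [Finset.disjoint_left]
    intro v hv hv'
    exact Finset.disjoint_left.1 (W.disj j) (hej ▸ Finset.mem_image_of_mem _ hv)
      (he2 ▸ Finset.mem_image_of_mem _ hv')
  have hsub : b ∪ b' ⊆ c.1 := Finset.union_subset hbc (hcc ▸ hbc')
  have h4 : (b ∪ b').card = 4 := by
    rw [Finset.card_union_of_disjoint hdisj, hb2, hb2']
  have h3 : c.1.card = 3 := hT.1 _ c.2
  have := Finset.card_le_card hsub
  omega

lemma spoke_spoke_old (W : (stellar T).Zigzag) {j : ℤ}
    (h1 : ¬ noRight (W.e j)) (h2 : ¬ noRight (W.e (j + 1))) : noRight (W.e (j + 2)) := by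
  obtain ⟨c, b, _, _, _, hej, hej1⟩ := face_two_edges W j
  rcases hej with hej | ⟨x, _, hej⟩
  · exact absurd (hej ▸ noRight_image_inl b) h1
  rcases hej1 with hej1 | ⟨y, _, hej1⟩
  · exact absurd (hej1 ▸ noRight_image_inl b) h2
  obtain ⟨c', b', _, _, _, he1, he2⟩ := face_two_edges W (j + 1)
  rcases he1 with he1 | ⟨y', _, he1⟩
  · exact absurd (he1 ▸ noRight_image_inl b') h2
  have hcc : c = c' := by
    have : Sum.inr c ∈ W.e (j + 1) := by rw [hej1]; simp
    rw [he1] at this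
    rcases Finset.mem_insert.1 this with h | h
    · exact Sum.inr_injective h
    · exact absurd h (by simp)
  rcases he2 with he2 | ⟨z, _, he2⟩
  · rw [show j + 1 + 1 = j + 2 by ring] at he2
    exact he2 ▸ noRight_image_inl b'
  · exfalso
    rw [show j + 1 + 1 = j + 2 by ring] at he2
    refine Finset.disjoint_left.1 (W.disj j) (?_ : Sum.inr c ∈ W.e j) ?_
    · rw [hej]; simp
    · rw [he2, hcc]; simp

lemma exists_old (W : (stellar T).Zigzag) : ∃ p, noRight (W.e p) := by
  by_cases h0 : noRight (W.e 0)
  · exact ⟨0, h0⟩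
  by_cases h1 : noRight (W.e 1)
  · exact ⟨1, h1⟩
  · exact ⟨2, by simpa using spoke_spoke_old W h0 (by simpa using h1)⟩

lemma old_add3 (hT : T.IsProper) (W : (stellar T).Zigzag) {j : ℤ}
    (h : noRight (W.e j)) : noRight (W.e (j + 3)) := by
  have h1 : ¬ noRight (W.e (j + 1)) := fun h' => not_old_old W h h'
  have h2 : ¬ noRight (W.e (j + 2)) := fun h' => not_old_skip hT W h h'
  have := spoke_spoke_old W (j := j + 1) h1 (by rwa [show j + 1 + 1 = j + 2 by ring])
  rwa [show j + 1 + 2 = j + 3 by ring] at this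

lemma old_sub3 (hT : T.IsProper) (W : (stellar T).Zigzag) {j : ℤ}
    (h : noRight (W.e j)) : noRight (W.e (j - 3)) := by
  have h1 : ¬ noRight (W.e (j - 1)) := by
    intro h'
    exact not_old_old W h' (by rwa [show j - 1 + 1 = j by ring])
  have h2 : ¬ noRight (W.e (j - 2)) := by
    intro h'
    exact not_old_skip hT W h' (by rwa [show j - 2 + 2 = j by ring])
  by_contra h3
  have := spoke_spoke_old W (j := j - 3) h3 (by rwa [show j - 3 + 1 = j - 2 by ring])
  rw [show j - 3 + 2 = j - 1 by ring] at this
  exact h1 this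

lemma old_mul3 (hT : T.IsProper) (W : (stellar T).Zigzag) {p : ℤ}
    (hp : noRight (W.e p)) (i : ℤ) : noRight (W.e (p + 3 * i)) := by
  induction i using Int.induction_on with
  | zero => simpa using hp
  | succ i ih =>
    have := old_add3 hT W ih
    rwa [show p + 3 * (i : ℤ) + 3 = p + 3 * ((i : ℤ) + 1) by ring] at this
  | pred i ih =>
    have := old_sub3 hT W ih
    rwa [show p + 3 * (-(i : ℤ)) - 3 = p + 3 * (-(i : ℤ) - 1) by ring] at this

/-- Extract the second element of a 2-element finset containing `x`. -/
lemma pair_of_mem {b : Finset V} (hb2 : b.card = 2) {x : V} (hx : x ∈ b) :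
    ∃ w, x ≠ w ∧ b = {x, w} := by
  have h1 : (b.erase x).card = 1 := by rw [Finset.card_erase_of_mem hx, hb2]
  obtain ⟨w, hw⟩ := Finset.card_eq_one.1 h1
  have hne : x ≠ w := by
    have : w ∈ b.erase x := hw ▸ Finset.mem_singleton_self w
    exact (Finset.ne_of_mem_erase this).symm
  refine ⟨w, hne, ?_⟩
  rw [← Finset.insert_erase hx, hw]

/-- The key structural lemma: the shape of one block of a zigzag in the
stellar subdivision, starting at an old edge. -/
lemma block (hT : T.IsProper) (W : (stellar T).Zigzag) {j : ℤ} (hj : noRight (W.e j)) :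
    ∃ (c : {f : Finset V // f ∈ T.faces}) (x w z : V),
      W.e j = ({x, w} : Finset V).image Sum.inl ∧
      W.e (j + 1) = {Sum.inr c, Sum.inl x} ∧
      W.e (j + 2) = {Sum.inr c, Sum.inl z} ∧
      W.e (j + 3) = ({z, w} : Finset V).image Sum.inl ∧
      W.f j = insert (Sum.inr c) (({x, w} : Finset V).image Sum.inl) ∧
      W.f (j + 1) = insert (Sum.inr c) (({x, z} : Finset V).image Sum.inl) ∧
      W.f (j + 2) = insert (Sum.inr c) (({z, w} : Finset V).image Sum.inl) ∧
      c.1 = {x, w, z} ∧ x ≠ w ∧ x ≠ z ∧ w ≠ z := by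
  obtain ⟨c, b, hbc, hb2, hfj, hej, hej1⟩ := face_two_edges W j
  -- step 2 : W.e j is the old edge of its face
  rcases hej with hej | ⟨x, _, hej⟩
  swap
  · exact absurd (by rw [hej]; simp : Sum.inr c ∈ W.e j) (hj c)
  -- step 3 : W.e (j+1) is a spoke
  rcases hej1 with hej1 | ⟨x, hxb, hej1⟩
  · exact absurd (hej.trans hej1.symm) (W.edges_ne j)
  -- step 4 : b = {x, w}
  obtain ⟨w, hxw, hbxw⟩ := pair_of_mem hb2 hxb
  -- step 5 : the faces around the centre
  obtain ⟨c₁, b₁, hbc1, hb12, hfj1, he1, he2⟩ := face_two_edges W (j + 1)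
  rcases he1 with he1 | ⟨x₁, hx1b, he1⟩
  · exact absurd (he1 ▸ (by rw [hej1]; simp : Sum.inr c ∈ W.e (j + 1)))
      (noRight_image_inl b₁ c)
  have hcc1 : c = c₁ := by
    have : Sum.inr c ∈ W.e (j + 1) := by rw [hej1]; simp
    rw [he1] at this
    rcases Finset.mem_insert.1 this with h | h
    · exact Sum.inr_injective h
    · exact absurd h (by simp)
  have hx1 : x = x₁ := by
    have : Sum.inl x ∈ W.e (j + 1) := by rw [hej1]; simp
    rw [he1] at this
    rcases Finset.mem_insert.1 this with h | h
    · exact absurd h (by simp)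
    · exact Sum.inl_injective (Finset.mem_singleton.1 h)
  subst hcc1 hx1
  -- step 5' : W.e (j+2) is a spoke
  rcases he2 with he2 | ⟨z, hzb1, he2⟩
  · exfalso
    exact not_old_skip hT W hj
      (by rw [show j + 2 = j + 1 + 1 by ring, he2]; exact noRight_image_inl b₁)
  rw [show j + 1 + 1 = j + 2 by ring] at he2
  -- step 6 : z ≠ x
  have hzx : z ≠ x := by
    intro h
    apply W.edges_ne (j + 1)
    rw [hej1, show j + 1 + 1 = j + 2 by ring, he2, h]
  -- step 7 : b₁ = {x, z}
  have hb1 : b₁ = {x, z} := by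
    refine (Finset.eq_of_subset_of_card_le ?_ ?_).symm
    · intro v hv
      rcases Finset.mem_insert.1 hv with h | h
      · exact h ▸ hx1b
      · exact (Finset.mem_singleton.1 h) ▸ hzb1
    · rw [hb12, Finset.card_insert_of_notMem (by simp [hzx.symm] : x ∉ ({z} : Finset V)),
        Finset.card_singleton]
  -- step 8 : z ∉ b
  have hzb : z ∉ b := by
    intro h
    refine Finset.disjoint_left.1 (W.disj j) ?_ (?_ : Sum.inl z ∈ W.e (j + 2))
    · rw [hej]; exact Finset.mem_image_of_mem _ h
    · rw [he2]; simp
  have hzw : z ≠ w := fun h => hzb (h ▸ hbxw ▸ (by simp : w ∈ ({x, w} : Finset V)))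
  -- step 9 : the third face
  obtain ⟨c₂, b₂, hbc2, hb22, hfj2, hee2, hee3⟩ := face_two_edges W (j + 2)
  rcases hee2 with hee2 | ⟨z₂, hz2b, hee2⟩
  · exact absurd (hee2 ▸ (by rw [he2]; simp : Sum.inr c ∈ W.e (j + 2)))
      (noRight_image_inl b₂ c)
  have hcc2 : c = c₂ := by
    have : Sum.inr c ∈ W.e (j + 2) := by rw [he2]; simp
    rw [hee2] at this
    rcases Finset.mem_insert.1 this with h | h
    · exact Sum.inr_injective h
    · exact absurd h (by simp)
  have hz2 : z = z₂ := by
    have : Sum.inl z ∈ W.e (j + 2) := by rw [he2]; simp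
    rw [hee2] at this
    rcases Finset.mem_insert.1 this with h | h
    · exact absurd h (by simp)
    · exact Sum.inl_injective (Finset.mem_singleton.1 h)
  subst hcc2 hz2
  -- step 9' : W.e (j+3) is old
  have hold3 : noRight (W.e (j + 3)) := old_add3 hT W hj
  rcases hee3 with hee3 | ⟨u, _, hee3⟩
  swap
  · exact absurd (by rw [show j + 3 = j + 2 + 1 by ring, hee3]; simp :
      Sum.inr c ∈ W.e (j + 3)) (hold3 c)
  rw [show j + 2 + 1 = j + 3 by ring] at hee3
  -- step 10 : x ∉ b₂
  have hxb2 : x ∉ b₂ := by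
    intro h
    refine Finset.disjoint_left.1 (W.disj (j + 1)) (?_ : Sum.inl x ∈ W.e (j + 1)) ?_
    · rw [hej1]; simp
    · rw [show j + 1 + 2 = j + 3 by ring, hee3]
      exact Finset.mem_image_of_mem _ h
  -- step 11 : c.1 = {x, w, z}
  have hc3 : c.1.card = 3 := hT.1 _ c.2
  have hcxwz : c.1 = {x, w, z} := by
    refine (Finset.eq_of_subset_of_card_le ?_ ?_).symm
    · intro v hv
      rcases Finset.mem_insert.1 hv with h | h
      · exact h ▸ hbc (hbxw ▸ (by simp : x ∈ ({x, w} : Finset V)))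
      rcases Finset.mem_insert.1 h with h | h
      · exact h ▸ hbc (hbxw ▸ (by simp : w ∈ ({x, w} : Finset V)))
      · exact (Finset.mem_singleton.1 h) ▸ hbc1 hzb1
    · rw [hc3]
      rw [Finset.card_insert_of_notMem (by simp [hxw, hzx.symm]),
        Finset.card_insert_of_notMem (by simp [hzw.symm]), Finset.card_singleton]
  -- step 12 : b₂ = {z, w}
  obtain ⟨w₂, hzw2, hb2e⟩ := pair_of_mem hb22 hz2b
  have hw2 : w₂ = w := by
    have : w₂ ∈ c.1 := hbc2 (hb2e ▸ (by simp : w₂ ∈ ({z, w₂} : Finset V)))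
    rw [hcxwz] at this
    rcases Finset.mem_insert.1 this with h | h
    · exact absurd (h ▸ hb2e ▸ (by simp : w₂ ∈ ({z, w₂} : Finset V))) hxb2
    rcases Finset.mem_insert.1 h with h | h
    · exact h
    · exact absurd (Finset.mem_singleton.1 h).symm hzw2
  rw [hw2] at hb2e
  exact ⟨c, x, w, z, hbxw ▸ hej, hej1, he2, hb2e ▸ hee3, hbxw ▸ hfj,
    hb1 ▸ hfj1, hb2e ▸ hfj2, hcxwz, hxw, fun h => hzx h.symm, fun h => hzw h.symm⟩

lemma block_link (W : (stellar T).Zigzag) {j : ℤ} {c c' : {f : Finset V // f ∈ T.faces}}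
    {w z x' w' : V}
    (he2 : W.e (j + 2) = {Sum.inr c, Sum.inl z})
    (he3 : W.e (j + 3) = ({z, w} : Finset V).image Sum.inl)
    (he3' : W.e (j + 3) = ({x', w'} : Finset V).image Sum.inl)
    (he4 : W.e (j + 4) = {Sum.inr c', Sum.inl x'})
    (hf2 : W.f (j + 2) = insert (Sum.inr c) (({z, w} : Finset V).image Sum.inl))
    (hf3 : W.f (j + 3) = insert (Sum.inr c') (({x', w'} : Finset V).image Sum.inl))
    (hxw' : x' ≠ w') :
    x' = w ∧ w' = z ∧ c ≠ c' := by
  have hset : ({z, w} : Finset V) = {x', w'} := by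
    have := he3.symm.trans he3'
    have := congrArg (leftOf (T := T)) this
    rwa [leftOf_image_inl, leftOf_image_inl] at this
  have hx'z : x' ≠ z := by
    intro h
    refine Finset.disjoint_left.1 (W.disj (j + 2)) (?_ : Sum.inl z ∈ W.e (j + 2)) ?_
    · rw [he2]; simp
    · rw [show j + 2 + 2 = j + 4 by ring, he4, ← h]; simp
  have hx'w : x' = w := by
    have : x' ∈ ({z, w} : Finset V) := by rw [hset]; simp
    rcases Finset.mem_insert.1 this with h | h
    · exact absurd h hx'z
    · exact Finset.mem_singleton.1 h
  have hw'z : w' = z := by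
    have : w' ∈ ({z, w} : Finset V) := by rw [hset]; simp
    rcases Finset.mem_insert.1 this with h | h
    · exact h
    · exact absurd (hx'w.trans (Finset.mem_singleton.1 h).symm) hxw'
  refine ⟨hx'w, hw'z, ?_⟩
  intro h
  apply W.faces_ne (j + 2)
  rw [hf2, show j + 2 + 1 = j + 3 by ring, hf3, hset, h]

lemma e_period3 (W : (stellar T).Zigzag) {n : ℕ} (h : ∀ m : ℤ, W.e (m + n) = W.e m)
    (m : ℤ) : W.e (m + 3 * n) = W.e m := by
  rw [show m + 3 * (n : ℤ) = ((m + n) + n) + n by ring, h, h, h]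

/-- Every zigzag in the stellar subdivision is (up to a shift) the lift of a
zigzag of the base triangulation. -/
lemma proj_exists (hT : T.IsProper) (W : (stellar T).Zigzag) :
    ∃ (Z : T.Zigzag) (p : ℤ), ∀ j : ℤ, W.e j = Z.liftE (j - p) := by
  classical
  obtain ⟨p, hp⟩ := exists_old W
  have holds : ∀ i : ℤ, noRight (W.e (p + 3 * i)) := old_mul3 hT W hp
  have hblock := fun i : ℤ => block hT W (holds i)
  choose c x w z hE0 hE1 hE2 hE3 hF0 hF1 hF2 hc hxw hxz hwz using hblock
  -- re-index the equations
  have hE0' : ∀ i : ℤ, W.e (p + 3 * i) = ({x i, w i} : Finset V).image Sum.inl := hE0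
  have hE1' : ∀ i : ℤ, W.e (p + 3 * i + 1) = {Sum.inr (c i), Sum.inl (x i)} := hE1
  have hE2' : ∀ i : ℤ, W.e (p + 3 * i + 2) = {Sum.inr (c i), Sum.inl (z i)} := hE2
  have link : ∀ i : ℤ, x (i + 1) = w i ∧ w (i + 1) = z i ∧ c i ≠ c (i + 1) := by
    intro i
    have e1 : p + 3 * (i + 1) = (p + 3 * i) + 3 := by ring
    have e2 : p + 3 * (i + 1) + 1 = (p + 3 * i) + 4 := by ring
    refine block_link W (hE2 i) (hE3 i) ?_ ?_ (hF2 i) ?_ (hxw (i + 1))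
    · rw [← e1]; exact hE0 (i + 1)
    · rw [← e2]; exact hE1 (i + 1)
    · rw [← e1]; exact hF0 (i + 1)
  -- the projected zigzag
  refine ⟨⟨fun i => {x i, w i}, fun i => (c i).1, fun i => w i, ?_, ?_, ?_, ?_, ?_, ?_, ?_, ?_, ?_⟩,
    p, ?_⟩
  · -- e_mem
    intro i
    show ({x i, w i} : Finset V) ∈ T.edges
    refine mem_edges_of (c i).2 ?_ ?_
    · rw [hc i]
      intro v hv
      rcases Finset.mem_insert.1 hv with h | h
      · exact h ▸ (by simp)
      · exact (Finset.mem_singleton.1 h) ▸ (by simp)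
    · rw [Finset.card_insert_of_notMem (by simp [hxw i]), Finset.card_singleton]
  · -- f_mem
    exact fun i => (c i).2
  · -- sub_left
    intro i
    show ({x i, w i} : Finset V) ⊆ (c i).1
    rw [hc i]
    intro v hv
    rcases Finset.mem_insert.1 hv with h | h
    · exact h ▸ (by simp)
    · exact (Finset.mem_singleton.1 h) ▸ (by simp)
  · -- sub_right
    intro i
    show ({x (i + 1), w (i + 1)} : Finset V) ⊆ (c i).1
    rw [(link i).1, (link i).2.1, hc i]
    intro v hv
    rcases Finset.mem_insert.1 hv with h | h
    · exact h ▸ (by simp)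
    · exact (Finset.mem_singleton.1 h) ▸ (by simp)
  · -- edges_ne
    intro i h
    have : x i ∈ ({x (i + 1), w (i + 1)} : Finset V) := by rw [← h]; simp
    rw [(link i).1, (link i).2.1] at this
    rcases Finset.mem_insert.1 this with h' | h'
    · exact hxw i h'
    · exact hxz i (Finset.mem_singleton.1 h')
  · -- faces_ne
    intro i h
    exact (link i).2.2 (Subtype.ext h)
  · -- disj
    intro i
    show Disjoint ({x i, w i} : Finset V) {x (i + 2), w (i + 2)}
    have hx2 : x (i + 2) = z i := by
      have := (link (i + 1)).1
      rw [show i + 1 + 1 = i + 2 by ring] at this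
      rw [this, (link i).2.1]
    have hw2 : w (i + 2) = z (i + 1) := by
      have := (link (i + 1)).2.1
      rwa [show i + 1 + 1 = i + 2 by ring] at this
    have hz1x : z (i + 1) ≠ x i := by
      intro h
      apply (link i).2.2
      apply Subtype.ext
      rw [hc i, hc (i + 1), (link i).1, (link i).2.1, ← h]
      ext v
      simp only [Finset.mem_insert, Finset.mem_singleton]
      tauto
    have hz1w : z (i + 1) ≠ w i := by
      intro h
      exact hxz (i + 1) (by rw [(link i).1, h])
    rw [hx2, hw2, Finset.disjoint_left]
    intro v hv1 hv2
    rcases Finset.mem_insert.1 hv1 with h1 | h1 <;>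
      rcases Finset.mem_insert.1 hv2 with h2 | h2
    · exact hxz i (h1.symm.trans h2)
    · exact hz1x ((Finset.mem_singleton.1 h2).symm.trans h1)
    · exact hwz i ((Finset.mem_singleton.1 h1).symm.trans h2)
    · exact hz1w ((Finset.mem_singleton.1 h2).symm.trans (Finset.mem_singleton.1 h1))
  · -- inter_eq
    intro i
    show ({x i, w i} : Finset V) ∩ {x (i + 1), w (i + 1)} = {w i}
    rw [(link i).1, (link i).2.1]
    ext v
    simp only [Finset.mem_inter, Finset.mem_insert, Finset.mem_singleton]
    constructor
    · rintro ⟨h1 | h1, h2 | h2⟩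
      · exact absurd (h1.symm.trans h2) (hxw i)
      · exact absurd (h1.symm.trans h2) (hxz i)
      · exact h1
      · exact h1.symm.trans h2 ▸ h1
    · rintro rfl
      exact ⟨Or.inr rfl, Or.inl rfl⟩
  · -- exists_period
    obtain ⟨n, hn, hper⟩ := W.exists_period
    have hWe : ∀ m : ℤ, W.e (m + 3 * n) = W.e m := e_period3 W (fun m => (hper m).1)
    have hxper : ∀ i : ℤ, x (i + n) = x i ∧ c (i + n) = c i := by
      intro i
      have h1 : W.e (p + 3 * (i + n) + 1) = W.e (p + 3 * i + 1) := by
        rw [show p + 3 * (i + (n : ℤ)) + 1 = (p + 3 * i + 1) + 3 * n by ring, hWe]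
      rw [hE1' (i + n), hE1' i] at h1
      constructor
      · have : Sum.inl (x (i + n)) ∈ ({Sum.inr (c i), Sum.inl (x i)} :
            Finset (V ⊕ {f : Finset V // f ∈ T.faces})) := by rw [← h1]; simp
        rcases Finset.mem_insert.1 this with h | h
        · exact absurd h (by simp)
        · exact Sum.inl_injective (Finset.mem_singleton.1 h)
      · have : Sum.inr (c (i + n)) ∈ ({Sum.inr (c i), Sum.inl (x i)} :
            Finset (V ⊕ {f : Finset V // f ∈ T.faces})) := by rw [← h1]; simp
        rcases Finset.mem_insert.1 this with h | h
        · exact Sum.inr_injective h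
        · exact absurd h (by simp)
    have hwper : ∀ i : ℤ, w (i + n) = w i := by
      intro i
      have h0 : W.e (p + 3 * (i + n)) = W.e (p + 3 * i) := by
        rw [show p + 3 * (i + (n : ℤ)) = (p + 3 * i) + 3 * n by ring, hWe]
      rw [hE0' (i + n), hE0' i] at h0
      have hset : ({x (i + n), w (i + n)} : Finset V) = {x i, w i} := by
        have := congrArg (leftOf (T := T)) h0
        rwa [leftOf_image_inl, leftOf_image_inl] at this
      have : w (i + n) ∈ ({x i, w i} : Finset V) := by rw [← hset]; simp
      rcases Finset.mem_insert.1 this with h | h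
      · exact absurd ((hxper i).1 ▸ h : w (i + n) = x (i + n)).symm (hxw (i + n))
      · exact Finset.mem_singleton.1 h
    refine ⟨n, hn, fun i => ⟨?_, ?_, ?_⟩⟩
    · show ({x (i + n), w (i + n)} : Finset V) = {x i, w i}
      rw [(hxper i).1, hwper i]
    · show ((c (i + n)).1 : Finset V) = (c i).1
      rw [(hxper i).2]
    · exact hwper i
  · -- reconstruction
    intro j
    obtain ⟨i, r, hr, rfl⟩ : ∃ i r : ℤ, (r = 0 ∨ r = 1 ∨ r = 2) ∧ j = p + 3 * i + r :=
      ⟨(j - p) / 3, (j - p) % 3, by omega, by omega⟩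
    rcases hr with rfl | rfl | rfl
    · have hj : p + 3 * i + 0 - p = 3 * i := by ring
      rw [hj, Triangulation.Zigzag.liftE0 _ (i := i) rfl]
      simpa using hE0' i
    · have hj : p + 3 * i + 1 - p = 3 * i + 1 := by ring
      rw [hj, Triangulation.Zigzag.liftE1 _ (i := i) rfl, hE1' i, Finset.pair_comm]
      have hxw1 : x i = w (i - 1) := by
        have := (link (i - 1)).1
        rwa [show i - 1 + 1 = i by ring] at this
      rw [hxw1]
      congr 1
    · have hj : p + 3 * i + 2 - p = 3 * i + 2 := by ring
      rw [hj, Triangulation.Zigzag.liftE2 _ (i := i) rfl, hE2' i, ← (link i).2.1]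
      congr 1

/-! ### Transfer of equivalence -/

namespace Triangulation.Zigzag

variable {Z Z' : T.Zigzag}

lemma head_of_rot {k : ℤ} (h : ∀ i, Z'.e i = Z.e (i + k)) (i : ℤ) :
    Z'.head i = Z.head (i + k) := by
  apply Finset.singleton_injective
  rw [← Z'.inter_eq i, ← Z.inter_eq (i + k), h i, h (i + 1),
    show i + 1 + k = i + k + 1 by ring]

lemma f_of_rot (hT : T.IsProper) {k : ℤ} (h : ∀ i, Z'.e i = Z.e (i + k)) (i : ℤ) :
    Z'.f i = Z.f (i + k) := by
  rw [Z'.f_eq_union hT i, Z.f_eq_union hT (i + k), h i, h (i + 1),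
    show i + 1 + k = i + k + 1 by ring]

lemma head_of_rev {k : ℤ} (h : ∀ i, Z'.e i = Z.e (k - i)) (i : ℤ) :
    Z'.head i = Z.head (k - i - 1) := by
  have h1 : Z'.e i = Z.e ((k - i - 1) + 1) := by rw [h i]; congr 1; ring
  have h2 : Z'.e (i + 1) = Z.e (k - i - 1) := by rw [h (i + 1)]; congr 1; ring
  apply Finset.singleton_injective
  rw [← Z'.inter_eq i, ← Z.inter_eq (k - i - 1), h1, h2, Finset.inter_comm]

lemma f_of_rev (hT : T.IsProper) {k : ℤ} (h : ∀ i, Z'.e i = Z.e (k - i)) (i : ℤ) :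
    Z'.f i = Z.f (k - i - 1) := by
  have h1 : Z'.e i = Z.e ((k - i - 1) + 1) := by rw [h i]; congr 1; ring
  have h2 : Z'.e (i + 1) = Z.e (k - i - 1) := by rw [h (i + 1)]; congr 1; ring
  rw [Z'.f_eq_union hT i, Z.f_eq_union hT (k - i - 1), h1, h2, Finset.union_comm]

lemma liftE_rot (hT : T.IsProper) {k : ℤ} (h : ∀ i, Z'.e i = Z.e (i + k)) (m : ℤ) :
    Z'.liftE m = Z.liftE (m + 3 * k) := by
  induction m using int_cases3 with
  | h i =>
  refine ⟨?_, ?_, ?_⟩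
  · rw [Z'.liftE0 rfl, Z.liftE0 (show 3 * i + 3 * k = 3 * (i + k) by ring), h i]
  · have hh : Z'.head (i - 1) = Z.head (i + k - 1) := by
      rw [head_of_rot h (i - 1)]; congr 1; ring
    have hf : Z'.fc i = Z.fc (i + k) := Subtype.ext (f_of_rot hT h i)
    rw [Z'.liftE1 rfl, Z.liftE1 (show 3 * i + 1 + 3 * k = 3 * (i + k) + 1 by ring), hh, hf]
  · have hh : Z'.head (i + 1) = Z.head (i + k + 1) := by
      rw [head_of_rot h (i + 1)]; congr 1; ring
    have hf : Z'.fc i = Z.fc (i + k) := Subtype.ext (f_of_rot hT h i)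
    rw [Z'.liftE2 rfl, Z.liftE2 (show 3 * i + 2 + 3 * k = 3 * (i + k) + 2 by ring), hh, hf]

lemma liftE_rev (hT : T.IsProper) {k : ℤ} (h : ∀ i, Z'.e i = Z.e (k - i)) (m : ℤ) :
    Z'.liftE m = Z.liftE (3 * k - m) := by
  induction m using int_cases3 with
  | h i =>
  refine ⟨?_, ?_, ?_⟩
  · rw [Z'.liftE0 rfl, Z.liftE0 (show 3 * k - 3 * i = 3 * (k - i) by ring), h i]
  · have hh : Z'.head (i - 1) = Z.head ((k - i - 1) + 1) := by
      rw [head_of_rev h (i - 1)]; congr 1; ring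
    have hf : Z'.fc i = Z.fc (k - i - 1) := Subtype.ext (f_of_rev hT h i)
    rw [Z'.liftE1 rfl, Z.liftE2 (show 3 * k - (3 * i + 1) = 3 * (k - i - 1) + 2 by ring),
      hh, hf, Finset.pair_comm]
  · have hh : Z'.head (i + 1) = Z.head (k - i - 1 - 1) := by
      rw [head_of_rev h (i + 1)]; congr 1; ring
    have hf : Z'.fc i = Z.fc (k - i - 1) := Subtype.ext (f_of_rev hT h i)
    rw [Z'.liftE2 rfl, Z.liftE1 (show 3 * k - (3 * i + 2) = 3 * (k - i - 1) + 1 by ring),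
      hh, hf, Finset.pair_comm]

lemma lift_e_eq (Z : T.Zigzag) : Z.lift.e = Z.liftE := rfl

lemma liftE_old (Z : T.Zigzag) {j : ℤ} (h : noRight (Z.liftE j)) : j % 3 = 0 := by
  obtain ⟨i, r, hr, rfl⟩ : ∃ i r : ℤ, (r = 0 ∨ r = 1 ∨ r = 2) ∧ j = 3 * i + r :=
    ⟨j / 3, j % 3, by omega, by omega⟩
  rcases hr with rfl | rfl | rfl
  · omega
  · exact absurd (by rw [Z.liftE1 rfl]; simp : Sum.inr (Z.fc i) ∈ Z.liftE (3 * i + 1))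
      (h (Z.fc i))
  · exact absurd (by rw [Z.liftE2 rfl]; simp : Sum.inr (Z.fc i) ∈ Z.liftE (3 * i + 2))
      (h (Z.fc i))

lemma liftE_noRight0 (Z : T.Zigzag) {j : ℤ} (hj : j % 3 = 0) : noRight (Z.liftE j) := by
  rw [Z.liftE0 (show j = 3 * (j / 3) by omega)]
  exact noRight_image_inl _

end Triangulation.Zigzag

end Aux

/-- If `Γ'` is a triangulation of a surface, then every zigzag
`e₁, e₂, e₃, …` in `Γ'` extends to a zigzag `e₁, e'₁, e''₁, e₂, e'₂, e''₂, e₃, …`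
in the stellar subdivision `T(Γ')`, where `e'ᵢ` and `e''ᵢ` are edges incident
to the new face-vertices; consequently `T(Γ')` is z-knotted if and only if
`Γ'` is z-knotted. -/
theorem stmt9 {V : Type} [DecidableEq V] (T : Triangulation V) (hT : T.IsProper) :
    (∀ Z : T.Zigzag, ∃ W : (stellar T).Zigzag, ∀ i : ℤ,
      W.e (3 * i) = (Z.e i).image Sum.inl ∧
      (∃ c, Sum.inr c ∈ W.e (3 * i + 1)) ∧
      (∃ c, Sum.inr c ∈ W.e (3 * i + 2))) ∧
    (T.IsZKnotted ↔ (stellar T).IsZKnotted) := by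
  constructor
  · -- every zigzag extends
    intro Z
    refine ⟨Z.lift, fun i => ⟨Z.liftE0 rfl, ⟨Z.fc i, ?_⟩, ⟨Z.fc i, ?_⟩⟩⟩
    · show Sum.inr (Z.fc i) ∈ Z.liftE (3 * i + 1)
      rw [Z.liftE1 rfl]; simp
    · show Sum.inr (Z.fc i) ∈ Z.liftE (3 * i + 2)
      rw [Z.liftE2 rfl]; simp
  constructor
  · -- z-knotted is preserved under subdivision
    rintro ⟨⟨Z⟩, huniq⟩
    refine ⟨⟨Z.lift⟩, fun W W' => ?_⟩
    obtain ⟨ZW, p, hW⟩ := proj_exists hT W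
    obtain ⟨ZW', p', hW'⟩ := proj_exists hT W'
    rcases huniq ZW ZW' with ⟨k, hk⟩ | ⟨k, hk⟩
    · left
      refine ⟨p - p' + 3 * k, fun m => ?_⟩
      rw [hW' m, hW (m + (p - p' + 3 * k)),
        Triangulation.Zigzag.liftE_rot hT hk (m - p')]
      congr 1
      ring
    · right
      refine ⟨3 * k + p' + p, fun m => ?_⟩
      rw [hW' m, hW (3 * k + p' + p - m),
        Triangulation.Zigzag.liftE_rev hT hk (m - p')]
      congr 1
      ring
  · -- z-knotted descends from the subdivision
    rintro ⟨⟨W⟩, huniq⟩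
    obtain ⟨Z0, _, _⟩ := proj_exists hT W
    refine ⟨⟨Z0⟩, fun Z Z' => ?_⟩
    rcases huniq Z.lift Z'.lift with ⟨k, hk⟩ | ⟨k, hk⟩
    · simp only [Triangulation.Zigzag.lift_e_eq] at hk
      have h3 : k % 3 = 0 := by
        have h0 : noRight (Z'.liftE 0) := Z'.liftE_noRight0 (by norm_num)
        rw [hk 0] at h0
        have := Z.liftE_old h0
        omega
      obtain ⟨k1, rfl⟩ : ∃ k1, k = 3 * k1 := ⟨k / 3, by omega⟩
      left
      refine ⟨k1, fun i => ?_⟩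
      have h := hk (3 * i)
      rw [Z'.liftE0 rfl, Z.liftE0 (show 3 * i + 3 * k1 = 3 * (i + k1) by ring)] at h
      have h2 := congrArg (leftOf (T := T)) h
      rwa [leftOf_image_inl, leftOf_image_inl] at h2
    · simp only [Triangulation.Zigzag.lift_e_eq] at hk
      have h3 : k % 3 = 0 := by
        have h0 : noRight (Z'.liftE 0) := Z'.liftE_noRight0 (by norm_num)
        rw [hk 0] at h0
        have := Z.liftE_old h0
        omega
      obtain ⟨k1, rfl⟩ : ∃ k1, k = 3 * k1 := ⟨k / 3, by omega⟩
      right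
      refine ⟨k1, fun i => ?_⟩
      have h := hk (3 * i)
      rw [Z'.liftE0 rfl, Z.liftE0 (show 3 * k1 - 3 * i = 3 * (k1 - i) by ring)] at h
      have h2 := congrArg (leftOf (T := T)) h
      rwa [leftOf_image_inl, leftOf_image_inl] at h2
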